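/- Let (A, m) be a local ring and E a finitely generated A-module. Then E is free of rank n if and only if both (1) the vector space dimension of E ⊗_A A/m over A/m equals n, and (2) the (n-1)-th Fitting ideal Fitt_{n-1}(E) is the zero ideal. -/

import Mathlib

open scoped TensorProduct

/-- The `n`-th Fitting ideal of a module `M` over a commutative ring `A` (with `n : ℤ`
to accommodate the convention `Fitt_{-1}(M) = 0`): it is generated by the determinants of
all `(N - n) × (N - n)` matrices whose columns are relations, i.e. elements of the kernel
of a surjection `A^N → M`, evaluated at a choice of `N - n` rows.  (For `N - n > N` a row
must repeat so the determinants vanish, and for `n ≥ N` the empty determinant is `1`; this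
reproduces the standard conventions, and the ideal is independent of the presentation.) -/
noncomputable def fittingIdeal (A : Type*) [CommRing A] (M : Type*) [AddCommGroup M]
    [Module A M] (n : ℤ) : Ideal A :=
  ⨆ (N : ℕ) (π : ((Fin N → A) →ₗ[A] M)) (_ : Function.Surjective π),
    Ideal.span { x | ∃ (r : Fin ((N - n).toNat) → Fin N)
      (v : Fin ((N - n).toNat) → LinearMap.ker π),
      x = Matrix.det (Matrix.of fun i j => ((v j : Fin N → A) (r i))) }

/-- A product of an `m × k` and a `k × m` matrix with `k < m` has vanishing determinant. -/
lemma det_mul_eq_zero_of_card_lt {A : Type*} [CommRing A] {m : ℕ} {ι : Type*} [Fintype ι]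
    (h : Fintype.card ι < m) (B : Matrix (Fin m) ι A) (C : Matrix ι (Fin m) A) :
    (B * C).det = 0 := by
  classical
  have hBC : (B * C) = Matrix.of (fun i => ∑ t : ι, B i t • C t) := by
    ext i j
    simp [Matrix.mul_apply, Finset.sum_apply]
  set f : (Fin m → A) [⋀^Fin m]→ₗ[A] A := Matrix.detRowAlternating with hf
  have hdet : (B * C).det = f (fun i => ∑ t : ι, B i t • C t) := by
    rw [hBC]; rfl
  have hms := MultilinearMap.map_sum (f := f.toMultilinearMap) (g := fun i t => B i t • C t)
  simp only [AlternatingMap.coe_multilinearMap] at hms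
  rw [hdet, hms]
  refine Finset.sum_eq_zero fun p _ => ?_
  obtain ⟨i, j, hij, hp⟩ := Fintype.exists_ne_map_eq_of_card_lt p (by simpa using h)
  have h0 : f (fun i => C (p i)) = 0 :=
    AlternatingMap.map_eq_zero_of_eq _ _ (show C (p i) = C (p j) from by rw [hp]) hij
  have hsm := MultilinearMap.map_smul_univ (f := f.toMultilinearMap)
    (fun i => B i (p i)) (fun i => C (p i))
  simp only [AlternatingMap.coe_multilinearMap] at hsm
  rw [show (fun i => B i (p i) • C (p i)) = fun i => (fun i' => B i' (p i')) i • C (p i)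
    from rfl, hsm, h0, smul_zero]

/-- A determinant of coordinates of `T` vectors lying in a free submodule of rank `< T`
vanishes. -/
lemma det_eq_zero_of_vectors {A : Type*} [CommRing A] [Nontrivial A] {N T : ℕ} {K : Submodule A (Fin N → A)}
    [Module.Finite A K] [Module.Free A K] (hT : Module.finrank A K < T)
    (r : Fin T → Fin N) (v : Fin T → K) :
    Matrix.det (Matrix.of fun i j => ((v j : Fin N → A) (r i))) = 0 := by
  classical
  let b := Module.Free.chooseBasis A K
  have hcard : Fintype.card (Module.Free.ChooseBasisIndex A K) = Module.finrank A K :=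
    (Module.finrank_eq_card_chooseBasisIndex A K).symm
  let B : Matrix (Fin T) (Module.Free.ChooseBasisIndex A K) A :=
    Matrix.of fun i t => (b t : Fin N → A) (r i)
  let C : Matrix (Module.Free.ChooseBasisIndex A K) (Fin T) A :=
    Matrix.of fun t j => b.repr (v j) t
  have hfact : (Matrix.of fun i j => ((v j : Fin N → A) (r i))) = B * C := by
    ext i j
    have hx : ∀ (x : K) (l : Fin N),
        (x : Fin N → A) l = ∑ t, (b t : Fin N → A) l * b.repr x t := by
      intro x l
      conv_lhs => rw [← b.sum_repr x]
      rw [Submodule.coe_sum]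
      simp [Finset.sum_apply, mul_comm]
    simpa [B, C, Matrix.mul_apply] using hx (v j) (r i)
  rw [hfact]
  exact det_mul_eq_zero_of_card_lt (by omega) B C

/-- Relations among coordinates of kernel elements of a surjection onto a free module:
any `(N - n + 1) × (N - n + 1)` determinant of relations vanishes. -/
lemma det_rel_eq_zero {A : Type*} [CommRing A] [IsLocalRing A] {N n T : ℕ}
    (π' : (Fin N → A) →ₗ[A] (Fin n → A)) (hπ' : Function.Surjective π')
    (hT : T = ((N : ℤ) - ((n : ℤ) - 1)).toNat)
    (r : Fin T → Fin N) (v : Fin T → LinearMap.ker π') :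
    Matrix.det (Matrix.of fun i j => ((v j : Fin N → A) (r i))) = 0 := by
  classical
  obtain ⟨s, hs⟩ := Module.projective_lifting_property π' LinearMap.id hπ'
  let eq1 : ((LinearMap.ker π') × (Fin n → A)) ≃ₗ[A] (Fin N → A) :=
    lequivProdOfRightSplitExact (LinearMap.ker π').injective_subtype
      (Submodule.range_subtype _) hs
  haveI : Module.Finite A (LinearMap.ker π') :=
    Module.Finite.of_surjective
      ((LinearMap.fst A (LinearMap.ker π') (Fin n → A)) ∘ₗ eq1.symm.toLinearMap)
      (Prod.fst_surjective.comp eq1.symm.surjective)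
  haveI : Module.Projective A (LinearMap.ker π') := by
    refine Module.Projective.of_split (M := Fin N → A)
      (eq1.toLinearMap ∘ₗ LinearMap.inl A (LinearMap.ker π') (Fin n → A))
      ((LinearMap.fst A (LinearMap.ker π') (Fin n → A)) ∘ₗ eq1.symm.toLinearMap) ?_
    ext x; simp
  haveI : Module.FinitePresentation A (LinearMap.ker π') :=
    Module.finitePresentation_of_projective A _
  haveI : Module.Free A (LinearMap.ker π') := Module.free_of_flat_of_isLocalRing
  have hrk : Module.finrank A (LinearMap.ker π') + n = N := by
    have h1 := eq1.finrank_eq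
    rwa [Module.finrank_prod, Module.finrank_pi, Module.finrank_pi, Fintype.card_fin,
      Fintype.card_fin] at h1
  exact det_eq_zero_of_vectors (by omega) r v

/-- Let `(A, 𝔪)` be a local ring and `E` a finitely generated `A`-module.
Then `E` is free of rank `n` if and only if (1) `dim_{A/𝔪}(E ⊗_A A/𝔪) = n` and
(2) the Fitting ideal `Fitt_{n-1}(E)` is zero. -/
theorem free_of_rank_iff_fitting (A : Type*) [CommRing A] [IsLocalRing A]
    (E : Type*) [AddCommGroup E] [Module A E] [Module.Finite A E] (n : ℕ) :
    Nonempty (E ≃ₗ[A] (Fin n → A)) ↔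
      (Module.finrank (IsLocalRing.ResidueField A) (IsLocalRing.ResidueField A ⊗[A] E) = n ∧
        fittingIdeal A E ((n : ℤ) - 1) = 0) := by
  classical
  set k := IsLocalRing.ResidueField A
  constructor
  · rintro ⟨e⟩
    constructor
    · -- dimension of the fibre
      have e2 : k ⊗[A] E ≃ₗ[k] k ⊗[A] (Fin n → A) := LinearEquiv.baseChange A k _ _ e
      rw [e2.finrank_eq, Module.finrank_baseChange, Module.finrank_pi, Fintype.card_fin]
    · -- the Fitting ideal vanishes
      rw [fittingIdeal, Ideal.zero_eq_bot, eq_bot_iff]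
      refine iSup_le fun N => iSup_le fun π => iSup_le fun hπ => ?_
      rw [Ideal.span_le]
      rintro x ⟨r, v, rfl⟩
      suffices hdet : Matrix.det (Matrix.of fun i j => ((v j : Fin N → A) (r i))) = 0 by
        simp [hdet]
      have hπ' : Function.Surjective (e.toLinearMap ∘ₗ π) := e.surjective.comp hπ
      have hker : LinearMap.ker π = LinearMap.ker (e.toLinearMap ∘ₗ π) := by
        rw [LinearMap.ker_comp, LinearEquiv.ker, Submodule.comap_bot]
      exact det_rel_eq_zero (e.toLinearMap ∘ₗ π) hπ' rfl r
        (fun j => ⟨(v j : Fin N → A), hker ▸ (v j).2⟩)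
  · rintro ⟨h1, h2⟩
    -- choose `n` generators via Nakayama
    let b : Module.Basis (Fin n) k (k ⊗[A] E) := Module.finBasisOfFinrankEq k (k ⊗[A] E) h1
    choose f hf using TensorProduct.mk_surjective A E k Ideal.Quotient.mk_surjective
    have hspan : Submodule.span A (Set.range fun i => f (b i)) = ⊤ :=
      IsLocalRing.span_eq_top_of_tmul_eq_basis (R := A) (f := fun i => f (b i)) b
        (fun i => hf (b i))
    set π : (Fin n → A) →ₗ[A] E := Fintype.linearCombination A (fun i => f (b i)) with hπdef
    have hπ : Function.Surjective π := by
      rw [← LinearMap.range_eq_top, hπdef, Fintype.range_linearCombination]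
      exact hspan
    have hker : ∀ w ∈ LinearMap.ker π, w = 0 := by
      intro w hw
      funext i
      have hx : w i ∈ fittingIdeal A E ((n : ℤ) - 1) := by
        have hle : Ideal.span { x | ∃ (r : Fin (((n : ℕ) - ((n : ℤ) - 1)).toNat) → Fin n)
            (v : Fin (((n : ℕ) - ((n : ℤ) - 1)).toNat) → LinearMap.ker π),
            x = Matrix.det (Matrix.of fun i j => ((v j : Fin n → A) (r i))) }
              ≤ fittingIdeal A E ((n : ℤ) - 1) :=
          le_iSup_of_le n (le_iSup_of_le π (le_iSup_of_le hπ le_rfl))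
        refine hle (Ideal.subset_span ⟨fun _ => i, fun _ => ⟨w, hw⟩, ?_⟩)
        haveI : Unique (Fin ((((n : ℕ) : ℤ) - ((n : ℤ) - 1)).toNat)) := by
          have h1 : ((((n : ℕ) : ℤ)) - ((n : ℤ) - 1)).toNat = 1 := by omega
          rw [h1]; infer_instance
        rw [Matrix.det_unique]
        rfl
      rw [h2] at hx
      simpa using hx
    have hinj : Function.Injective π := by
      rw [← LinearMap.ker_eq_bot]
      exact (Submodule.eq_bot_iff _).mpr hker
    exact ⟨(LinearEquiv.ofBijective π ⟨hinj, hπ⟩).symm⟩
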